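/- Let X be a compact metric space, let T : X → X be a nonexpansive operator such that lim_{j→∞} Tʲ(y⁰) exists for every y⁰ ∈ X, and let ε > 0. Then there exist a positive integer k₀ and a δ > 0 such that for each infinite sequence {xⁱ}_{i=0}^∞ ⊂ X satisfying ρ(x^{i+1}, T(xⁱ)) ≤ δ for all i = 0,1,…, the inequality d(xⁱ, Fix(T)) ≤ ε holds for all integers i ≥ k₀. -/

import Mathlib

open Metric Filter

/-- Let `X` be a compact metric space and `T : X → X` a nonexpansive operator whose
iterates converge pointwise, and let `ε > 0`. Then there exist a positive integer `k₀`
and `δ > 0` such that every infinite sequence `{xⁱ}` in `X` with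
`dist (x^{i+1}) (T xⁱ) ≤ δ` for all `i` satisfies `d(xⁱ, Fix(T)) ≤ ε` for all `i ≥ k₀`. -/
theorem inexact_orbit_near_fixed_point_set
    {X : Type*} [MetricSpace X] [CompactSpace X] (T : X → X)
    (hT : ∀ x y : X, dist (T x) (T y) ≤ dist x y)
    (hconv : ∀ y₀ : X, ∃ z : X,
      Filter.Tendsto (fun j : ℕ => T^[j] y₀) Filter.atTop (nhds z))
    (ε : ℝ) (hε : 0 < ε) :
    ∃ k₀ : ℕ, 0 < k₀ ∧ ∃ δ > 0, ∀ x : ℕ → X,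
      (∀ i : ℕ, dist (x (i + 1)) (T (x i)) ≤ δ) →
      ∀ i ≥ k₀, Metric.infDist (x i) {y : X | T y = y} ≤ ε := by
  by_cases hX : Nonempty X
  case neg =>
    refine ⟨1, one_pos, 1, one_pos, fun x _ i _ => absurd ⟨x 0⟩ hX⟩
  set F : Set X := {y : X | T y = y} with hF
  -- T is continuous
  have hTc : Continuous T := by
    refine (LipschitzWith.of_dist_le_mul (K := 1) ?_).continuous
    intro x y; simpa using hT x y
  -- iterates are nonexpansive
  have hTiter : ∀ (n : ℕ) (x y : X), dist (T^[n] x) (T^[n] y) ≤ dist x y := by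
    intro n
    induction n with
    | zero => simp
    | succ n ih =>
      intro x y
      rw [Function.iterate_succ_apply', Function.iterate_succ_apply']
      exact le_trans (hT _ _) (ih x y)
  -- limits of iterates are fixed points
  have hfix : ∀ y : X, ∃ z ∈ F, Tendsto (fun j : ℕ => T^[j] y) atTop (nhds z) := by
    intro y
    obtain ⟨z, hz⟩ := hconv y
    refine ⟨z, ?_, hz⟩
    have h1 : Tendsto (fun j : ℕ => T^[j + 1] y) atTop (nhds z) :=
      hz.comp (tendsto_add_atTop_nat 1)
    have h2 : Tendsto (fun j : ℕ => T (T^[j] y)) atTop (nhds (T z)) :=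
      (hTc.tendsto z).comp hz
    have h3 : (fun j : ℕ => T (T^[j] y)) = fun j : ℕ => T^[j + 1] y := by
      funext j; rw [Function.iterate_succ_apply']
    rw [h3] at h2
    exact tendsto_nhds_unique h2 h1
  obtain ⟨y₀⟩ := hX
  obtain ⟨z₀, hz₀F, _⟩ := hfix y₀
  have hFne : F.Nonempty := ⟨z₀, hz₀F⟩
  have hFclosed : IsClosed F := isClosed_eq hTc continuous_id
  -- d(Tw, F) ≤ d(w, F)
  have hmono : ∀ w : X, infDist (T w) F ≤ infDist w F := by
    intro w
    obtain ⟨p, hpF, hp⟩ := (hFclosed.isCompact).exists_infDist_eq_dist hFne w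
    rw [hp]
    calc infDist (T w) F ≤ dist (T w) (T p) := by
          rw [show T p = p from hpF]; exact infDist_le_dist_of_mem hpF
      _ ≤ dist w p := hT w p
  have hmono' : ∀ (m n : ℕ) (w : X), m ≤ n → infDist (T^[n] w) F ≤ infDist (T^[m] w) F := by
    intro m n w hmn
    induction n with
    | zero => simp_all
    | succ n ih =>
      rcases Nat.lt_or_ge m (n + 1) with h | h
      · rw [Function.iterate_succ_apply']
        exact le_trans (hmono _) (ih (Nat.lt_succ_iff.mp h))
      · have : m = n + 1 := le_antisymm hmn h
        simp [this]
  -- uniform convergence step: choose k₀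
  have hstep : ∃ k₀ : ℕ, 0 < k₀ ∧ ∀ w : X, infDist (T^[k₀] w) F ≤ ε / 2 := by
    -- for each y, choose j y with infDist (T^[j y] y) F < ε/4
    have hchoice : ∀ y : X, ∃ j : ℕ, infDist (T^[j] y) F < ε / 4 := by
      intro y
      obtain ⟨z, hzF, hz⟩ := hfix y
      have : Tendsto (fun j : ℕ => dist (T^[j] y) z) atTop (nhds 0) :=
        tendsto_iff_dist_tendsto_zero.mp hz
      obtain ⟨j, hj⟩ := (this.eventually (gt_mem_nhds (by linarith : (0:ℝ) < ε/4))).exists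
      exact ⟨j, lt_of_le_of_lt (infDist_le_dist_of_mem hzF) hj⟩
    choose j hj using hchoice
    obtain ⟨t, ht⟩ := isCompact_univ.elim_finite_subcover
      (fun y : X => Metric.ball y (ε / 4)) (fun y => isOpen_ball)
      (fun z _ => Set.mem_iUnion.mpr ⟨z, mem_ball_self (by linarith)⟩)
    refine ⟨t.sup j + 1, Nat.succ_pos _, fun w => ?_⟩
    obtain ⟨y, hyt, hw⟩ := Set.mem_iUnion₂.mp (ht (Set.mem_univ w))
    have h1 : infDist (T^[j y] w) F ≤ infDist (T^[j y] y) F + dist (T^[j y] w) (T^[j y] y) :=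
      infDist_le_infDist_add_dist
    have h2 : dist (T^[j y] w) (T^[j y] y) ≤ dist w y := hTiter _ _ _
    have h3 : dist w y < ε / 4 := mem_ball.mp hw
    have h4 : infDist (T^[j y] w) F ≤ ε / 2 := by
      have := hj y; linarith
    exact le_trans (hmono' (j y) (t.sup j + 1) w
      (le_trans (Finset.le_sup hyt) (Nat.le_succ _))) h4
  obtain ⟨k₀, hk₀, hk⟩ := hstep
  refine ⟨k₀, hk₀, ε / (2 * k₀), by positivity, fun x hx i hi => ?_⟩
  set δ := ε / (2 * k₀) with hδ
  -- accumulation of errors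
  have herr : ∀ (s n : ℕ), dist (x (s + n)) (T^[n] (x s)) ≤ n * δ := by
    intro s n
    induction n with
    | zero => simp
    | succ n ih =>
      have h1 : dist (x (s + (n + 1))) (T (x (s + n))) ≤ δ := by
        have := hx (s + n); simpa [add_assoc] using this
      have h2 : dist (T (x (s + n))) (T (T^[n] (x s))) ≤ dist (x (s + n)) (T^[n] (x s)) :=
        hT _ _
      calc dist (x (s + (n + 1))) (T^[n + 1] (x s))
          ≤ dist (x (s + (n + 1))) (T (x (s + n))) + dist (T (x (s + n))) (T^[n + 1] (x s)) :=
            dist_triangle _ _ _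
        _ ≤ δ + dist (x (s + n)) (T^[n] (x s)) := by
            rw [Function.iterate_succ_apply']
            exact add_le_add h1 h2
        _ ≤ δ + n * δ := by linarith
        _ = (n + 1 : ℕ) * δ := by push_cast; ring
  have hi' : i - k₀ + k₀ = i := Nat.sub_add_cancel hi
  have h1 : infDist (x i) F ≤ infDist (T^[k₀] (x (i - k₀))) F
      + dist (x i) (T^[k₀] (x (i - k₀))) := infDist_le_infDist_add_dist
  have h2 : dist (x i) (T^[k₀] (x (i - k₀))) ≤ k₀ * δ := by
    have := herr (i - k₀) k₀
    rwa [hi'] at this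
  have h3 : (k₀ : ℝ) * δ = ε / 2 := by
    rw [hδ]; field_simp
  have h4 := hk (x (i - k₀))
  calc infDist (x i) F ≤ ε / 2 + ε / 2 := by linarith
    _ = ε := by ring
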